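/- Let H be exponential with mean λ and D independent with density (2/(α R₁²)) y^{2/α − 1} on [0, R₁^α], and set b₃ = 2/α + 1, b₂ = R₁^α/λ, b₁ = 2λ^{2/α}/(α R₁²). Then the CDF of g = H/D admits the hypergeometric representation F_g(x) = (b₁ b₂^{b₃}/b₃) · x · ₂F₂(b₃, 1; b₃+1, 2; −b₂ x) for x ≥ 0. -/

import Mathlib

open MeasureTheory intervalIntegral

/-- The Pochhammer symbol (rising factorial) `(x)_k = x(x+1)⋯(x+k−1)`. -/
noncomputable def poch (x : ℝ) (k : ℕ) : ℝ := ∏ i ∈ Finset.range k, (x + i)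

/-- The generalized hypergeometric function `₂F₂(a₁,a₂;b₁,b₂;z)`. -/
noncomputable def F22 (a₁ a₂ b₁ b₂ z : ℝ) : ℝ :=
  ∑' k : ℕ, poch a₁ k * poch a₂ k / (poch b₁ k * poch b₂ k * (k.factorial : ℝ)) * z ^ k

lemma poch_one (k : ℕ) : poch 1 k = k.factorial := by
  induction k with
  | zero => simp [poch]
  | succ n ih =>
    rw [poch, Finset.prod_range_succ, ← poch, ih, Nat.factorial_succ]
    push_cast; ring

lemma poch_two (k : ℕ) : poch 2 k = (k+1).factorial := by
  induction k with
  | zero => simp [poch]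
  | succ n ih =>
    rw [poch, Finset.prod_range_succ, ← poch, ih]
    rw [show n+1+1 = n+2 by ring, Nat.factorial_succ (n+1)]
    push_cast; ring

lemma poch_succ_right (x : ℝ) (k : ℕ) : poch x (k+1) = poch x k * (x + k) := by
  rw [poch, Finset.prod_range_succ, ← poch]

lemma poch_succ_left (x : ℝ) (k : ℕ) : poch x (k+1) = x * poch (x+1) k := by
  rw [poch, Finset.prod_range_succ']
  simp only [Nat.cast_zero, add_zero]
  rw [mul_comm, poch]
  congr 1
  apply Finset.prod_congr rfl
  intro i _
  push_cast; ring

lemma poch_pos {x : ℝ} (hx : 0 < x) (k : ℕ) : 0 < poch x k := by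
  apply Finset.prod_pos
  intro i _
  positivity

lemma F22_special {b : ℝ} (hb : 0 < b) (z : ℝ) :
    F22 b 1 (b+1) 2 z = ∑' k : ℕ, b * z^k / ((b+k) * (k+1).factorial) := by
  unfold F22
  apply tsum_congr
  intro k
  rw [poch_one, poch_two]
  have h1 : poch (b+1) k = poch b k * (b + k) / b := by
    rw [← poch_succ_right, poch_succ_left]
    field_simp
  rw [h1]
  have h2 : (0:ℝ) < poch b k := poch_pos hb k
  have h3 : (0:ℝ) < b + k := by positivity
  have h4 : (0:ℝ) < (k.factorial : ℝ) := by positivity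
  field_simp

lemma sum_exp_series (u : ℝ) : 1 - Real.exp (-u) =
    ∑' k : ℕ, (-1 : ℝ)^k * u^(k+1) / (k+1).factorial := by
  have h : Real.exp (-u) = ∑' n : ℕ, (-u)^n / n.factorial := by
    rw [Real.exp_eq_exp_ℝ, NormedSpace.exp_eq_tsum_div]
  have hs : Summable (fun n : ℕ => (-u)^n / n.factorial) :=
    Real.summable_pow_div_factorial (-u)
  rw [h, Summable.tsum_eq_zero_add hs]
  simp only [pow_zero, Nat.factorial_zero, Nat.cast_one]
  have : ∀ k : ℕ, (-1 : ℝ)^k * u^(k+1) / (k+1).factorial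
      = -((-u)^(k+1) / (k+1).factorial) := by
    intro k
    have : (-u)^(k+1) = (-1)^(k+1) * u^(k+1) := by rw [neg_pow]
    rw [this, pow_succ]
    ring
  rw [tsum_congr this, tsum_neg]
  ring

lemma summable_succ_fact (M : ℝ) : Summable (fun k : ℕ => M^(k+1) / (k+1).factorial) :=
  (Real.summable_pow_div_factorial M).comp_injective Nat.succ_injective

lemma rpow_integrableOn {p B : ℝ} (hp : 0 < p) (hB : 0 < B) :
    IntegrableOn (fun y : ℝ => y ^ (p - 1)) (Set.Ioc 0 B) volume := by
  have h : IntervalIntegrable (fun y : ℝ => y ^ (p - 1)) volume 0 B :=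
    intervalIntegrable_rpow' (by linarith)
  rw [intervalIntegrable_iff_integrableOn_Ioc_of_le hB.le] at h
  exact h

lemma rpow_integral {p B : ℝ} (hp : 0 < p) (hB : 0 < B) :
    ∫ y in Set.Ioc 0 B, y ^ (p - 1) = B ^ p / p := by
  rw [← intervalIntegral.integral_of_le hB.le,
    integral_rpow (Or.inl (by linarith : (-1:ℝ) < p - 1))]
  rw [sub_add_cancel, Real.zero_rpow (by linarith : p ≠ 0)]
  ring

lemma key_integral {p B x l c : ℝ} (hp : 0 < p) (hB : 0 < B) (hx : 0 ≤ x)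
    (hl : 0 < l) (hc : 0 ≤ c) :
    ∫ y in Set.Ioc 0 B, (1 - Real.exp (-(x*y)/l)) * (c * y^(p-1)) =
      ∑' k : ℕ, (-1:ℝ)^k * x^(k+1) / (l^(k+1) * (k+1).factorial) * c
        * B^(p+1+(k:ℝ)) / (p+1+(k:ℝ)) := by
  set F : ℕ → ℝ → ℝ := fun k y =>
    ((-1:ℝ)^k * (x*y/l)^(k+1) / (k+1).factorial) * (c * y^(p-1)) with hF
  have hcong : Set.EqOn (fun y => (1 - Real.exp (-(x*y)/l)) * (c * y^(p-1)))
      (fun y => ∑' k, F k y) (Set.Ioc 0 B) := by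
    intro y _
    simp only
    rw [neg_div, sum_exp_series (x*y/l), ← tsum_mul_right]
  have hIrpow := rpow_integrableOn hp hB
  have hInt : ∀ k : ℕ, IntegrableOn (F k) (Set.Ioc 0 B) volume := by
    intro k
    apply Integrable.bdd_mul (c := (x*B/l)^(k+1) / (k+1).factorial)
      (hIrpow.const_mul c)
    · apply AEStronglyMeasurable.restrict
      apply Continuous.aestronglyMeasurable
      continuity
    · filter_upwards [ae_restrict_mem measurableSet_Ioc] with y hy
      have hy0 : 0 ≤ y := hy.1.le
      have hxy : 0 ≤ x*y/l := by positivity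
      rw [Real.norm_eq_abs, abs_div, abs_mul, abs_pow, abs_neg, abs_one, one_pow,
        abs_pow, abs_of_nonneg hxy, Nat.abs_cast, one_mul]
      gcongr
      exact hy.2
  have hbound : ∀ k : ℕ, ∫ y in Set.Ioc 0 B, ‖F k y‖ ≤
      (x*B/l)^(k+1)/(k+1).factorial * ∫ y in Set.Ioc 0 B, (c * y^(p-1)) := by
    intro k
    rw [← MeasureTheory.integral_const_mul]
    apply setIntegral_mono_on ((hInt k).norm)
      (((hIrpow.const_mul c).const_mul _)) measurableSet_Ioc
    intro y hy
    have hy0 : 0 < y := hy.1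
    have h1 : 0 ≤ x*y/l := by positivity
    have h2 : 0 ≤ c * y^(p-1) := by positivity
    rw [hF]
    simp only
    rw [norm_mul, Real.norm_eq_abs, Real.norm_eq_abs, abs_of_nonneg h2, abs_div,
      abs_mul, abs_pow, abs_neg, abs_one, one_pow, abs_pow, abs_of_nonneg h1,
      Nat.abs_cast, one_mul, mul_comm ((x*B/l)^(k+1)/(k+1).factorial),
      mul_comm ((x*y/l)^(k+1)/(k+1).factorial)]
    gcongr
    exact hy.2
  have hSum : Summable (fun k => ∫ y in Set.Ioc 0 B, ‖F k y‖) := by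
    apply Summable.of_nonneg_of_le (fun k => integral_nonneg (fun y => norm_nonneg _))
      hbound
    exact (summable_succ_fact (x*B/l)).mul_right _
  rw [setIntegral_congr_fun measurableSet_Ioc hcong,
    ← integral_tsum_of_summable_integral_norm hInt hSum]
  apply tsum_congr
  intro k
  have hterm : Set.EqOn (F k)
      (fun y => ((-1:ℝ)^k * (x/l)^(k+1) / (k+1).factorial * c) * y^((p+1+(k:ℝ))-1))
      (Set.Ioc 0 B) := by
    intro y hy
    have hy0 : 0 < y := hy.1
    rw [hF]
    simp only
    have e1 : (x*y/l)^(k+1) = (x/l)^(k+1) * y^(k+1) := by ring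
    have e2 : (y:ℝ)^(k+1) = y^(((k+1:ℕ)):ℝ) := (Real.rpow_natCast y (k+1)).symm
    have e3 : y^(((k+1:ℕ)):ℝ) * y^(p-1) = y^((p+1+(k:ℝ))-1) := by
      rw [← Real.rpow_add hy0]
      congr 1
      push_cast
      ring
    rw [e1, e2, ← e3]
    ring
  rw [setIntegral_congr_fun measurableSet_Ioc hterm, MeasureTheory.integral_const_mul,
    rpow_integral (by positivity) hB, div_pow]
  ring

lemma exp_cdf {l : ℝ} (hl : 0 < l) {c : ℝ} (hc : 0 ≤ c) :
    ∫ t in Set.Ioc 0 c, (1/l) * Real.exp (-t/l) = 1 - Real.exp (-c/l) := by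
  rw [← intervalIntegral.integral_of_le hc]
  have h : ∀ t ∈ Set.uIcc (0:ℝ) c,
      HasDerivAt (fun s => -Real.exp (-s/l)) ((1/l) * Real.exp (-t/l)) t := by
    intro t _
    have h1 : HasDerivAt (fun s : ℝ => -s/l) (-1/l) t := by
      simpa using (hasDerivAt_id t).neg.div_const l
    have h2 := (Real.hasDerivAt_exp (-t/l)).comp t h1
    have h3 : HasDerivAt (fun s => -Real.exp (-s/l)) (-(Real.exp (-t / l) * (-1 / l))) t :=
      h2.neg
    convert h3 using 1
    ring
  rw [intervalIntegral.integral_eq_sub_of_hasDerivAt h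
    (by apply Continuous.intervalIntegrable; continuity)]
  rw [neg_div]; ring_nf; rw [Real.exp_zero]; ring

lemma rhs_eq {p B x l c : ℝ} (hp : 0 < p) (hB : 0 < B) (hl : 0 < l) :
    c * l^p * (B/l)^(p+1) / (p+1) * x * F22 (p+1) 1 (p+1+1) 2 (-(B/l*x))
      = ∑' k : ℕ, (-1:ℝ)^k * x^(k+1) / (l^(k+1) * (k+1).factorial) * c
          * B^(p+1+(k:ℝ)) / (p+1+(k:ℝ)) := by
  rw [F22_special (by positivity : (0:ℝ) < p+1), ← tsum_mul_left]
  apply tsum_congr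
  intro k
  have hk1 : (0:ℝ) < p+1+(k:ℝ) := by positivity
  have hfac : (0:ℝ) < ((k+1).factorial : ℝ) := by positivity
  have hA : (-(B/l*x))^k = (-1:ℝ)^k * (B/l)^k * x^k := by
    rw [neg_pow, mul_pow]; ring
  have hBk : ((B/l):ℝ)^k = (B/l)^((k:ℕ):ℝ) := (Real.rpow_natCast _ k).symm
  have hC : (B/l)^(p+1) * (B/l)^((k:ℕ):ℝ) = (B/l)^(p+1+(k:ℝ)) :=
    (Real.rpow_add (by positivity) _ _).symm
  have hD : ((B/l):ℝ)^(p+1+(k:ℝ)) = B^(p+1+(k:ℝ)) / l^(p+1+(k:ℝ)) :=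
    Real.div_rpow hB.le hl.le _
  have hE : l^p * l^(((k+1:ℕ)):ℝ) = l^(p+1+(k:ℝ)) := by
    rw [← Real.rpow_add hl]
    congr 1
    push_cast
    ring
  have hE2 : (l:ℝ)^(((k+1:ℕ)):ℝ) = l^(k+1) := Real.rpow_natCast _ (k+1)
  have hlp : (0:ℝ) < l^(p+1+(k:ℝ)) := Real.rpow_pos_of_pos hl _
  have hlk : (0:ℝ) < l^(k+1) := by positivity
  rw [hA, hBk]
  rw [show c * l^p * (B/l)^(p+1) / (p+1) * x
      * ((p+1) * ((-1:ℝ)^k * (B/l)^((k:ℕ):ℝ) * x^k) / ((p+1+(k:ℝ)) * (k+1).factorial))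
      = c * l^p * ((B/l)^(p+1) * (B/l)^((k:ℕ):ℝ)) / (p+1) * x
      * ((p+1) * ((-1:ℝ)^k * x^k) / ((p+1+(k:ℝ)) * (k+1).factorial)) by ring]
  rw [hC, hD]
  have hE' : l^(k+1) * l^p = l^(p+1+(k:ℝ)) := by
    rw [← hE2, ← Real.rpow_add hl]
    congr 1
    push_cast
    ring
  rw [eq_div_iff (ne_of_gt hk1)]
  field_simp
  linear_combination (c * x^(k+1)) * hE'

lemma exp_map_Iic {l : ℝ} (hl : 0 < l) {t : ℝ} (ht : 0 ≤ t) :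
    ((volume : Measure ℝ).withDensity (fun h =>
      ENNReal.ofReal (Set.indicator (Set.Ioi 0)
        (fun s => (1 / l) * Real.exp (-s / l)) h))) (Set.Iic t)
    = ENNReal.ofReal (1 - Real.exp (-t/l)) := by
  rw [withDensity_apply _ measurableSet_Iic]
  have h1 : (fun h : ℝ => ENNReal.ofReal (Set.indicator (Set.Ioi 0)
      (fun s => (1 / l) * Real.exp (-s / l)) h))
      = Set.indicator (Set.Ioi 0)
        (fun s => ENNReal.ofReal ((1 / l) * Real.exp (-s / l))) := by
    funext h
    by_cases hh : h ∈ Set.Ioi (0:ℝ)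
    · simp [Set.indicator_of_mem hh]
    · simp [Set.indicator_of_notMem hh]
  rw [h1]
  show ∫⁻ a in Set.Iic t, (Set.Ioi 0).indicator
      (fun s => ENNReal.ofReal (1 / l * Real.exp (-s / l))) a ∂volume = _
  rw [lintegral_indicator measurableSet_Ioi]
  rw [Measure.restrict_restrict measurableSet_Ioi,
    show Set.Ioi (0:ℝ) ∩ Set.Iic t = Set.Ioc 0 t by rw [Set.Ioi_inter_Iic]]
  rw [← ofReal_integral_eq_lintegral_ofReal, exp_cdf hl ht]
  · apply Continuous.integrableOn_Ioc
    continuity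
  · filter_upwards with s
    positivity

/-- Hypergeometric representation of the CDF of `g = H/D`:
with `b₃ = 2/α + 1`, `b₂ = R₁^α/λ`, `b₁ = 2λ^(2/α)/(α R₁²)`,
`F_g(x) = (b₁ b₂^(b₃)/b₃) x ₂F₂(b₃, 1; b₃+1, 2; −b₂ x)` for `x ≥ 0`. -/
theorem ratio_cdf_hypergeometric {Ω : Type*} [MeasurableSpace Ω]
    (ℙ : Measure Ω) [IsProbabilityMeasure ℙ]
    (R₁ α lam : ℝ) (hR₁ : 0 < R₁) (hα : 0 < α) (hlam : 0 < lam)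
    (H D : Ω → ℝ) (hH : Measurable H) (hD : Measurable D)
    (hindep : ProbabilityTheory.IndepFun H D ℙ)
    (hHpdf : Measure.map H ℙ =
      (volume : Measure ℝ).withDensity (fun h =>
        ENNReal.ofReal (Set.indicator (Set.Ioi 0)
          (fun t => (1 / lam) * Real.exp (-t / lam)) h)))
    (hDpdf : Measure.map D ℙ =
      (volume : Measure ℝ).withDensity (fun y =>
        ENNReal.ofReal (Set.indicator (Set.Icc 0 (R₁ ^ α))
          (fun z => 2 / (α * R₁ ^ 2) * z ^ (2 / α - 1)) y))) :
    ∀ x : ℝ, 0 ≤ x →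
      ℙ {ω | H ω / D ω ≤ x} =
        ENNReal.ofReal
          ((2 * lam ^ (2 / α) / (α * R₁ ^ 2)) * (R₁ ^ α / lam) ^ (2 / α + 1) /
              (2 / α + 1) * x *
            F22 (2 / α + 1) 1 (2 / α + 1 + 1) 2 (-(R₁ ^ α / lam * x))) := by

  intro x hx
  have hp : (0:ℝ) < 2/α := by positivity
  have hB : (0:ℝ) < R₁ ^ α := Real.rpow_pos_of_pos hR₁ α
  have hc : (0:ℝ) < 2 / (α * R₁^2) := by positivity
  set p : ℝ := 2/α with hpdef
  set B : ℝ := R₁ ^ α with hBdef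
  set c : ℝ := 2 / (α * R₁^2) with hcdef
  have hHm : AEMeasurable H ℙ := hH.aemeasurable
  have hDm : AEMeasurable D ℙ := hD.aemeasurable
  have hmap : Measure.map (fun ω => (H ω, D ω)) ℙ
      = (Measure.map H ℙ).prod (Measure.map D ℙ) :=
    (ProbabilityTheory.indepFun_iff_map_prod_eq_prod_map_map hHm hDm).mp hindep
  have hsetm : MeasurableSet {q : ℝ × ℝ | q.1 / q.2 ≤ x} :=
    measurableSet_le (measurable_fst.div measurable_snd) measurable_const
  haveI : IsProbabilityMeasure (Measure.map H ℙ) := Measure.isProbabilityMeasure_map hHm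
  haveI : IsProbabilityMeasure (Measure.map D ℙ) := Measure.isProbabilityMeasure_map hDm
  have h0 : ℙ {ω | H ω / D ω ≤ x}
      = (Measure.map H ℙ).prod (Measure.map D ℙ) {q : ℝ × ℝ | q.1 / q.2 ≤ x} := by
    rw [← hmap, Measure.map_apply (hH.prodMk hD) hsetm]
    rfl
  rw [h0, Measure.prod_apply_symm hsetm]
  -- density of D
  have hfDmeas : Measurable (fun y : ℝ =>
      ENNReal.ofReal (Set.indicator (Set.Icc 0 B) (fun z => c * z ^ (p - 1)) y)) := by
    apply Measurable.ennreal_ofReal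
    apply Measurable.indicator _ measurableSet_Icc
    fun_prop
  rw [hDpdf]
  rw [lintegral_withDensity_eq_lintegral_mul_non_measurable _ hfDmeas
    (Filter.Eventually.of_forall (fun y => ENNReal.ofReal_lt_top))]
  -- rewrite integrand a.e.
  have hae : ∀ᵐ y : ℝ ∂volume, y ≠ 0 := by
    rw [ae_iff]
    simp only [ne_eq, not_not, Set.setOf_eq_eq_singleton]
    exact Real.volume_singleton
  have hcongr : ∫⁻ y, ((fun y : ℝ =>
        ENNReal.ofReal (Set.indicator (Set.Icc 0 B) (fun z => c * z ^ (p - 1)) y)) *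
        (fun y => (Measure.map H ℙ) ((fun h => (h, y)) ⁻¹' {q : ℝ × ℝ | q.1 / q.2 ≤ x}))) y
      = ∫⁻ y, Set.indicator (Set.Ioc 0 B)
          (fun y => ENNReal.ofReal ((1 - Real.exp (-(x*y)/lam)) * (c * y ^ (p-1)))) y := by
    apply lintegral_congr_ae
    filter_upwards [hae] with y hy
    simp only [Pi.mul_apply]
    by_cases hyI : y ∈ Set.Ioc 0 B
    · have hyIcc : y ∈ Set.Icc 0 B := ⟨hyI.1.le, hyI.2⟩
      rw [Set.indicator_of_mem hyI, Set.indicator_of_mem hyIcc]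
      have hpre : ((fun h => (h, y)) ⁻¹' {q : ℝ × ℝ | q.1 / q.2 ≤ x}) = Set.Iic (x * y) := by
        ext h
        simp only [Set.mem_preimage, Set.mem_setOf_eq, Set.mem_Iic]
        rw [div_le_iff₀ hyI.1, mul_comm]
      rw [hpre, hHpdf, exp_map_Iic hlam (mul_nonneg hx hyI.1.le)]
      rw [← ENNReal.ofReal_mul (mul_nonneg hc.le (Real.rpow_nonneg hyI.1.le _))]
      congr 1
      ring
    · have hyIcc : y ∉ Set.Icc 0 B := by
        intro hmem
        exact hyI ⟨lt_of_le_of_ne hmem.1 (Ne.symm hy), hmem.2⟩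
      rw [Set.indicator_of_notMem hyI, Set.indicator_of_notMem hyIcc]
      simp
  rw [hcongr, lintegral_indicator measurableSet_Ioc]
  -- to real integral
  have hIrpow := rpow_integrableOn hp hB
  have hint : IntegrableOn (fun y : ℝ => (1 - Real.exp (-(x*y)/lam)) * (c * y ^ (p-1)))
      (Set.Ioc 0 B) volume := by
    apply Integrable.bdd_mul (c := 1) (hIrpow.const_mul c)
    · apply AEStronglyMeasurable.restrict
      apply Continuous.aestronglyMeasurable
      exact continuous_const.sub (Real.continuous_exp.comp
        ((continuous_const.mul continuous_id).neg.div_const lam))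
    · filter_upwards [ae_restrict_mem measurableSet_Ioc] with y hyI
      have h1 : Real.exp (-(x*y)/lam) ≤ 1 := by
        rw [Real.exp_le_one_iff]
        have : 0 ≤ x * y := mul_nonneg hx hyI.1.le
        rw [neg_div]
        simp only [Left.neg_nonpos_iff]
        positivity
      have h2 : 0 < Real.exp (-(x*y)/lam) := Real.exp_pos _
      rw [Real.norm_eq_abs, abs_le]
      constructor <;> nlinarith
  rw [← ofReal_integral_eq_lintegral_ofReal hint]
  · rw [key_integral hp hB hx hlam hc.le, ← rhs_eq hp hB hlam (c := c)]
    congr 1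
    ring
  · filter_upwards [ae_restrict_mem measurableSet_Ioc] with y hyI
    have h1 : Real.exp (-(x*y)/lam) ≤ 1 := by
      rw [Real.exp_le_one_iff, neg_div]
      simp only [Left.neg_nonpos_iff]
      have : 0 ≤ x * y := mul_nonneg hx hyI.1.le
      positivity
    have h3 : (0:ℝ) ≤ y ^ (p-1) := Real.rpow_nonneg hyI.1.le _
    simp only [Pi.zero_apply]
    exact mul_nonneg (by linarith) (mul_nonneg hc.le h3)
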